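/- If n is even (so FQ_n contains an odd cycle), then the shortest odd cycle in FQ_n has length n+1. -/

import Mathlib

def Q (n : ℕ) : SimpleGraph (Fin n → ZMod 2) :=
  SimpleGraph.fromRel (fun u v => hammingDist u v = 1)

def FQ (n : ℕ) : SimpleGraph (Fin n → ZMod 2) :=
  SimpleGraph.fromRel (fun u v => hammingDist u v = 1 ∨ hammingDist u v = n)

namespace FoldedAux

open SimpleGraph Finset

/-! ### Counting in lists -/

def cnt {α : Type*} (p : α → Prop) [DecidablePred p] (l : List α) : ℕ :=
  (l.map fun a => if p a then 1 else 0).sum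

@[simp] lemma cnt_nil {α : Type*} (p : α → Prop) [DecidablePred p] :
    cnt p ([] : List α) = 0 := rfl

@[simp] lemma cnt_cons {α : Type*} (p : α → Prop) [DecidablePred p] (a : α) (l : List α) :
    cnt p (a :: l) = (if p a then 1 else 0) + cnt p l := rfl

lemma cnt_congr {α : Type*} {p q : α → Prop} [DecidablePred p] [DecidablePred q] {l : List α}
    (h : ∀ a ∈ l, p a ↔ q a) : cnt p l = cnt q l := by
  induction l with
  | nil => rfl
  | cons a l ih =>
    rw [cnt_cons, cnt_cons, ih fun a ha => h a (List.mem_cons_of_mem _ ha),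
      if_congr (h a List.mem_cons_self) rfl rfl]

lemma cnt_split {α : Type*} (p q : α → Prop) [DecidablePred p] [DecidablePred q] (l : List α) :
    cnt p l = cnt (fun a => p a ∧ q a) l + cnt (fun a => p a ∧ ¬ q a) l := by
  induction l with
  | nil => rfl
  | cons a l ih =>
    simp only [cnt_cons, ih]
    by_cases hp : p a <;> by_cases hq : q a <;> simp [hp, hq] <;> omega

lemma cnt_add_cnt_not {α : Type*} (p : α → Prop) [DecidablePred p] (l : List α) :
    cnt p l + cnt (fun a => ¬ p a) l = l.length := by
  induction l with
  | nil => rfl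
  | cons a l ih =>
    simp only [cnt_cons, List.length_cons]
    by_cases hp : p a <;> simp [hp] <;> omega

lemma map_sum_congr {α : Type*} {f g : α → ℕ} {l : List α} (h : ∀ a ∈ l, f a = g a) :
    (l.map f).sum = (l.map g).sum := by
  rw [List.map_congr_left h]

lemma zmod2_cases : ∀ x : ZMod 2, x = 0 ∨ x = 1 := by decide

lemma zmod2_ne_zero {x : ZMod 2} (h : x ≠ 0) : x = 1 := by
  rcases zmod2_cases x with h0 | h1
  · exact absurd h0 h
  · exact h1

lemma sum_coord {n : ℕ} (l : List (Fin n → ZMod 2)) (i : Fin n) :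
    l.sum i = ((cnt (fun d => d i = 1) l : ℕ) : ZMod 2) := by
  induction l with
  | nil => simp
  | cons a l ih =>
    simp only [List.sum_cons, Pi.add_apply, ih, cnt_cons, Nat.cast_add]
    rcases zmod2_cases (a i) with h | h <;> simp [h]

lemma swap_count {n : ℕ} (Q : (Fin n → ZMod 2) → Prop) [DecidablePred Q]
    (l : List (Fin n → ZMod 2)) :
    ∑ i : Fin n, cnt (fun d => Q d ∧ d i = 1) l
      = (l.map fun d => if Q d then hammingNorm d else 0).sum := by
  induction l with
  | nil => simp
  | cons a l ih =>
    simp only [cnt_cons, List.map_cons, List.sum_cons, Finset.sum_add_distrib, ih]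
    congr 1
    by_cases hQ : Q a
    · simp only [hQ, true_and, if_true]
      rw [Finset.sum_boole, Nat.cast_id, hammingNorm]
      congr 1
      apply Finset.filter_congr
      intro i _
      constructor
      · intro h; rw [h]; exact one_ne_zero
      · exact zmod2_ne_zero
    · simp [hQ]

/-! ### The parity lower bound -/

lemma lower_bound_core {n : ℕ} (hn : 2 ≤ n) (heven : Even n)
    (l : List (Fin n → ZMod 2))
    (hmem : ∀ d ∈ l, hammingNorm d = 1 ∨ d = fun _ => 1)
    (hsum : l.sum = 0) (hodd : Odd l.length) : n + 1 ≤ l.length := by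
  classical
  have hks : cnt (fun d : Fin n → ZMod 2 => d = fun _ => 1) l
      + cnt (fun d : Fin n → ZMod 2 => ¬ d = fun _ => 1) l = l.length :=
    cnt_add_cnt_not _ l
  -- each coordinate count is even
  have hci : ∀ i : Fin n, 2 ∣ cnt (fun d => d i = 1) l := by
    intro i
    have h0 : ((cnt (fun d => d i = 1) l : ℕ) : ZMod 2) = 0 := by
      rw [← sum_coord, hsum]; rfl
    exact (ZMod.natCast_eq_zero_iff _ 2).mp h0
  -- decomposition of the coordinate count
  have hdecomp : ∀ i : Fin n,
      cnt (fun d => d i = 1) l = cnt (fun d : Fin n → ZMod 2 => d = fun _ => 1) l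
        + cnt (fun d : Fin n → ZMod 2 => (¬ d = fun _ => 1) ∧ d i = 1) l := by
    intro i
    rw [cnt_split (fun d => d i = 1) (fun d : Fin n → ZMod 2 => d = fun _ => 1) l]
    congr 1
    · apply cnt_congr
      intro d _
      constructor
      · exact fun h => h.2
      · intro h; exact ⟨by rw [h], h⟩
    · apply cnt_congr
      intro d _
      exact ⟨fun h => ⟨h.2, h.1⟩, fun h => ⟨h.2, h.1⟩⟩
  -- the sum of the off-diagonal counts
  have hswap : ∑ i : Fin n, cnt (fun d : Fin n → ZMod 2 => (¬ d = fun _ => 1) ∧ d i = 1) l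
      = cnt (fun d : Fin n → ZMod 2 => ¬ d = fun _ => 1) l := by
    rw [swap_count]
    have h1 : ∀ d ∈ l, (if ¬ d = (fun _ => 1) then hammingNorm d else 0)
        = (if ¬ d = (fun _ => 1) then 1 else 0 : ℕ) := by
      intro d hd
      by_cases hPd : d = fun _ => 1
      · rw [if_neg (fun hc => hc hPd), if_neg (fun hc => hc hPd)]
      · rcases hmem d hd with h | h
        · simp [hPd, h]
        · exact absurd h hPd
    rw [map_sum_congr h1]
    rfl
  -- the "complement" count is odd
  have hkodd : ¬ 2 ∣ cnt (fun d : Fin n → ZMod 2 => d = fun _ => 1) l := by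
    intro hk2
    have hs2 : 2 ∣ cnt (fun d : Fin n → ZMod 2 => ¬ d = fun _ => 1) l := by
      rw [← hswap]
      apply Finset.dvd_sum
      intro i _
      have h1 := hci i
      rw [hdecomp i] at h1
      clear * - h1 hk2
      revert h1 hk2
      generalize cnt (fun d : Fin n → ZMod 2 => d = fun _ => 1) l = K
      generalize cnt (fun d : Fin n → ZMod 2 => (¬ d = fun _ => 1) ∧ d i = 1) l = C
      omega
    obtain ⟨m, hm⟩ := hodd
    clear * - hks hk2 hs2 hm
    revert hks hk2 hs2
    generalize cnt (fun d : Fin n → ZMod 2 => d = fun _ => 1) l = K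
    generalize cnt (fun d : Fin n → ZMod 2 => ¬ d = fun _ => 1) l = S
    omega
  have hci' : ∀ i : Fin n,
      1 ≤ cnt (fun d : Fin n → ZMod 2 => (¬ d = fun _ => 1) ∧ d i = 1) l := by
    intro i
    have h1 := hci i
    rw [hdecomp i] at h1
    clear * - h1 hkodd
    revert h1 hkodd
    generalize cnt (fun d : Fin n → ZMod 2 => d = fun _ => 1) l = K
    generalize cnt (fun d : Fin n → ZMod 2 => (¬ d = fun _ => 1) ∧ d i = 1) l = C
    omega
  have hsn : n ≤ cnt (fun d : Fin n → ZMod 2 => ¬ d = fun _ => 1) l := by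
    calc n = ∑ _i : Fin n, 1 := by simp
    _ ≤ ∑ i : Fin n, cnt (fun d : Fin n → ZMod 2 => (¬ d = fun _ => 1) ∧ d i = 1) l :=
        Finset.sum_le_sum fun i _ => hci' i
    _ = _ := hswap
  clear * - hks hkodd hsn hn
  revert hks hkodd hsn
  generalize cnt (fun d : Fin n → ZMod 2 => d = fun _ => 1) l = K
  generalize cnt (fun d : Fin n → ZMod 2 => ¬ d = fun _ => 1) l = S
  omega

/-! ### Walk sums -/

lemma walk_sum {n : ℕ} {G : SimpleGraph (Fin n → ZMod 2)} {u v : Fin n → ZMod 2}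
    (w : G.Walk u v) :
    (w.darts.map fun d => d.toProd.1 - d.toProd.2).sum = u - v := by
  induction w with
  | nil => simp
  | @cons a b c h p ih =>
    rw [SimpleGraph.Walk.darts_cons, List.map_cons, List.sum_cons, ih]
    abel

lemma dart_diff {n : ℕ} (hn : 2 ≤ n) {a b : Fin n → ZMod 2} (h : (FQ n).Adj a b) :
    hammingNorm (a - b) = 1 ∨ (a - b) = fun _ => 1 := by
  rw [FQ, SimpleGraph.fromRel_adj] at h
  have hd : hammingDist a b = 1 ∨ hammingDist a b = n := by
    rcases h.2 with h1 | h1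
    · exact h1
    · rw [hammingDist_comm]; exact h1
  rw [hammingDist_comm a b, hammingDist_eq_hammingNorm, neg_add_eq_sub] at hd
  rcases hd with h1 | h1
  · exact Or.inl h1
  · right
    have huniv : ({i | (a - b) i ≠ 0} : Finset (Fin n)) = Finset.univ := by
      apply Finset.eq_univ_of_card
      rw [← hammingNorm] at *
      rw [h1, Fintype.card_fin]
    funext i
    have : i ∈ ({i | (a - b) i ≠ 0} : Finset (Fin n)) := by
      rw [huniv]; exact Finset.mem_univ i
    simp only [Finset.mem_filter, Finset.mem_univ, true_and] at this
    exact zmod2_ne_zero this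

/-! ### The explicit (n+1)-cycle -/

def vtx (n : ℕ) (i : ℕ) : Fin n → ZMod 2 := fun j => if (j : ℕ) < i then 1 else 0

lemma vtx_inj {n a b : ℕ} (ha : a ≤ n) (hb : b ≤ n) (h : vtx n a = vtx n b) : a = b := by
  by_contra hne
  have key : ∀ x y : ℕ, x < y → y ≤ n → vtx n x ≠ vtx n y := by
    intro x y hxy hyn heq
    have hx : x < n := lt_of_lt_of_le hxy hyn
    have := congrFun heq ⟨x, hx⟩
    simp only [vtx] at this
    rw [if_neg (by simp), if_pos (by simpa using hxy)] at this
    exact one_ne_zero this.symm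
  rcases Nat.lt_or_ge a b with hl | hl
  · exact key a b hl hb h
  · exact key b a (lt_of_le_of_ne hl (fun hh => hne hh.symm)) ha h.symm

lemma vtx_dist_succ {n i : ℕ} (hi : i < n) :
    hammingDist (vtx n i) (vtx n (i + 1)) = 1 := by
  have hset : ({j | vtx n i j ≠ vtx n (i+1) j} : Finset (Fin n)) = {⟨i, hi⟩} := by
    ext j
    simp only [Finset.mem_filter, Finset.mem_univ, true_and, Finset.mem_singleton,
      vtx, Fin.ext_iff]
    by_cases h1 : (j : ℕ) < i <;> by_cases h2 : (j : ℕ) < i + 1 <;>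
      simp [h1, h2] <;> omega
  rw [hammingDist, hset, Finset.card_singleton]

lemma vtx_adj_succ {n i : ℕ} (hi : i < n) : (FQ n).Adj (vtx n i) (vtx n (i + 1)) := by
  rw [FQ, SimpleGraph.fromRel_adj]
  refine ⟨?_, Or.inl (Or.inl (vtx_dist_succ hi))⟩
  intro h
  have := vtx_dist_succ hi
  rw [h, hammingDist_self] at this
  exact absurd this.symm one_ne_zero

lemma vtx_dist_zero_n {n : ℕ} : hammingDist (vtx n 0) (vtx n n) = n := by
  have hset : ({j | vtx n 0 j ≠ vtx n n j} : Finset (Fin n)) = Finset.univ := by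
    ext j
    simp [vtx, j.isLt]
  rw [hammingDist, hset, Finset.card_univ, Fintype.card_fin]

lemma vtx_adj_zero_n {n : ℕ} (hn : 2 ≤ n) : (FQ n).Adj (vtx n 0) (vtx n n) := by
  rw [FQ, SimpleGraph.fromRel_adj]
  refine ⟨?_, Or.inl (Or.inr vtx_dist_zero_n)⟩
  intro h
  have := vtx_dist_zero_n (n := n)
  rw [h, hammingDist_self] at this
  omega

def chain (n : ℕ) : (i : ℕ) → i ≤ n → (FQ n).Walk (vtx n i) (vtx n n)
  | i, h =>
    if hi : i = n then
      (SimpleGraph.Walk.nil).copy rfl (by rw [hi])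
    else
      SimpleGraph.Walk.cons (vtx_adj_succ (lt_of_le_of_ne h hi))
        (chain n (i + 1) (by omega))
  termination_by i => n - i
  decreasing_by omega

lemma chain_support (n : ℕ) : ∀ (m i : ℕ) (h : i ≤ n), n - i = m →
    (chain n i h).support = (List.range' i (n + 1 - i)).map (vtx n) := by
  intro m
  induction m with
  | zero =>
    intro i h hm
    have hi : i = n := by omega
    rw [chain, dif_pos hi]
    subst hi
    have h1 : i + 1 - i = 1 := by omega
    simp [h1, List.range'_succ]
  | succ m ih =>
    intro i h hm
    have hi : i ≠ n := by omega
    rw [chain, dif_neg hi]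
    rw [SimpleGraph.Walk.support_cons, ih (i + 1) (by omega) (by omega)]
    have h1 : n + 1 - i = (n - i) + 1 := by omega
    have h2 : n + 1 - (i + 1) = n - i := by omega
    rw [h1, h2, List.range'_succ, List.map_cons]

lemma chain_length (n : ℕ) : ∀ (m i : ℕ) (h : i ≤ n), n - i = m →
    (chain n i h).length = n - i := by
  intro m
  induction m with
  | zero =>
    intro i h hm
    have hi : i = n := by omega
    rw [chain, dif_pos hi]
    simp [hm]
  | succ m ih =>
    intro i h hm
    have hi : i ≠ n := by omega
    rw [chain, dif_neg hi]
    rw [SimpleGraph.Walk.length_cons, ih (i + 1) (by omega) (by omega)]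
    omega

lemma chain_edges (n : ℕ) : ∀ (m i : ℕ) (h : i ≤ n), n - i = m →
    ∀ e ∈ (chain n i h).edges, ∃ j, j < n ∧ e = s(vtx n j, vtx n (j + 1)) := by
  intro m
  induction m with
  | zero =>
    intro i h hm
    have hi : i = n := by omega
    rw [chain, dif_pos hi]
    simp [SimpleGraph.Walk.edges_copy]
  | succ m ih =>
    intro i h hm
    have hi : i ≠ n := by omega
    rw [chain, dif_neg hi]
    intro e he
    rw [SimpleGraph.Walk.edges_cons, List.mem_cons] at he
    rcases he with he | he
    · exact ⟨i, by omega, he⟩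
    · exact ih (i + 1) (by omega) (by omega) e he

end FoldedAux

open FoldedAux SimpleGraph

/-- If n is even, the shortest odd cycle in FQ_n has length n + 1. -/
theorem folded_hypercube_odd_girth (n : ℕ) (hn : 2 ≤ n) (heven : Even n) :
    (∃ (u : Fin n → ZMod 2) (w : (FQ n).Walk u u), w.IsCycle ∧ w.length = n + 1) ∧
    (∀ (u : Fin n → ZMod 2) (w : (FQ n).Walk u u),
      w.IsCycle → Odd w.length → n + 1 ≤ w.length) := by
  constructor
  · -- existence of an (n+1)-cycle
    refine ⟨vtx n 0, ?_⟩
    have h0n : (0 : ℕ) ≤ n := Nat.zero_le n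
    set p : (FQ n).Walk (vtx n n) (vtx n 0) := (chain n 0 h0n).reverse with hp
    refine ⟨SimpleGraph.Walk.cons (vtx_adj_zero_n hn) p, ?_, ?_⟩
    · rw [SimpleGraph.Walk.cons_isCycle_iff]
      constructor
      · rw [hp, SimpleGraph.Walk.isPath_reverse_iff]
        apply SimpleGraph.Walk.IsPath.mk'
        rw [chain_support n (n - 0) 0 h0n rfl]
        apply List.Nodup.map_on
        · intro x hx y hy hxy
          rw [List.mem_range'] at hx hy
          obtain ⟨ix, hix, hx⟩ := hx
          obtain ⟨iy, hiy, hy⟩ := hy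
          exact vtx_inj (by omega) (by omega) hxy
        · exact List.nodup_range'
      · intro hmem
        rw [hp, SimpleGraph.Walk.edges_reverse, List.mem_reverse] at hmem
        obtain ⟨j, hj, hje⟩ := chain_edges n (n - 0) 0 h0n rfl _ hmem
        rw [Sym2.eq_iff] at hje
        rcases hje with ⟨h1, h2⟩ | ⟨h1, h2⟩
        · have e1 : 0 = j := vtx_inj (Nat.zero_le n) (le_of_lt hj) h1
          have e2 : n = j + 1 := vtx_inj le_rfl (by omega) h2
          omega
        · have e1 : 0 = j + 1 := vtx_inj (Nat.zero_le n) (by omega) h1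
          omega
    · rw [SimpleGraph.Walk.length_cons, hp, SimpleGraph.Walk.length_reverse,
        chain_length n (n - 0) 0 h0n rfl]
      omega
  · -- lower bound
    intro u w _hc hodd
    have hlen : (w.darts.map fun d => d.toProd.1 - d.toProd.2).length = w.length := by
      rw [List.length_map, SimpleGraph.Walk.length_darts]
    have := lower_bound_core hn heven (w.darts.map fun d => d.toProd.1 - d.toProd.2)
      (by
        intro d hd
        rw [List.mem_map] at hd
        obtain ⟨dt, hdt, rfl⟩ := hd
        exact dart_diff hn dt.adj)
      (by rw [walk_sum w, sub_self])
      (by rw [hlen]; exact hodd)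
    rw [hlen] at this
    exact this
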